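/- Let b > 0 and define, for functions on (−∞, L], the weighted norm ‖u‖ = ∫_{−∞}^{L} |u(x)|·e^{(x−L)/b} dx. If h : (−∞,L] → ℝ is twice continuously differentiable with h'' of at most polynomial growth and p''_K is a sequence of continuous functions with ‖(h'' − p''_K)·e^{(x−L)/(2b)}‖_{L₁} → 0 and p''_K(L) = h''(L), then the antiderivatives p'_K(x) = ∫_L^x p''_K(u) du + h'(L) satisfy ‖(h' − p'_K)‖ → 0, where the first norm uses weight e^{(x−L)/(2b)} in place of e^{(x−L)/b}. -/

import Mathlib

open MeasureTheory Real Set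

/-- Integrating approximation errors: if `p''_K → h''` in the weighted L¹ norm with
weight `e^{(x-L)/(2b)}` on `(-∞, L]`, with `p''_K(L) = h''(L)`, then the
antiderivatives `p'_K(x) = ∫_L^x p''_K(u) du + h'(L)` converge to `h'` in the
weighted L¹ norm with weight `e^{(x-L)/b}`. -/
theorem antiderivative_weighted_L1_convergence (b L : ℝ) (hb : 0 < b)
    (h h' h'' : ℝ → ℝ)
    (hd1 : ∀ x, HasDerivAt h (h' x) x)
    (hd2 : ∀ x, HasDerivAt h' (h'' x) x)
    (hcont : Continuous h'')
    (hgrowth : ∃ C n, ∀ x ≤ L, |h'' x| ≤ C * (1 + |x|) ^ (n : ℕ))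
    (p'' : ℕ → ℝ → ℝ) (hp''cont : ∀ K, Continuous (p'' K))
    (hpL : ∀ K, p'' K L = h'' L)
    (hIntErr : ∀ K, Integrable
      (fun x : ℝ => |h'' x - p'' K x| * Real.exp ((x - L) / (2 * b)))
      (MeasureTheory.volume.restrict (Iic L)))
    (hconv : Filter.Tendsto
      (fun K : ℕ => ∫ x in Iic L, |h'' x - p'' K x| * Real.exp ((x - L) / (2 * b)))
      Filter.atTop (nhds 0)) :
    Filter.Tendsto
      (fun K : ℕ => ∫ x in Iic L,
        |h' x - ((∫ u in L..x, p'' K u) + h' L)| * Real.exp ((x - L) / b))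
      Filter.atTop (nhds 0) := by
  have hb2 : (0:ℝ) < 2 * b := by linarith
  have hcont' : Continuous h' :=
    continuous_iff_continuousAt.mpr fun x => (hd2 x).continuousAt
  -- abbreviations
  set E : ℕ → ℝ := fun K => ∫ x in Iic L, |h'' x - p'' K x| * Real.exp ((x - L) / (2 * b))
    with hEdef
  have hEnonneg : ∀ K, 0 ≤ E K := fun K =>
    integral_nonneg fun x => by positivity
  -- integrability of the weight exp ((x-L)/(2b)) on Iic L
  have hwderiv : ∀ x : ℝ, HasDerivAt (fun x => 2 * b * Real.exp ((x - L) / (2 * b)))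
      (Real.exp ((x - L) / (2 * b))) x := by
    intro x
    have h1 : HasDerivAt (fun x : ℝ => (x - L) / (2 * b)) (1 / (2 * b)) x := by
      simpa using ((hasDerivAt_id x).sub_const L).div_const (2 * b)
    have := (h1.exp).const_mul (2 * b)
    refine this.congr_deriv ?_
    rw [mul_comm (Real.exp _), ← mul_assoc, mul_one_div_cancel hb2.ne', one_mul]
  have hw : IntegrableOn (fun x : ℝ => Real.exp ((x - L) / (2 * b))) (Iic L) := by
    refine integrableOn_Iic_of_intervalIntegral_norm_bounded (2 * b) L
      (fun i : ℝ => ((Real.continuous_exp.comp (by continuity)).integrableOn_Ioc)) Filter.tendsto_id ?_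
    filter_upwards with y
    have key : (∫ x in y..L, ‖Real.exp ((x - L) / (2 * b))‖)
        = 2 * b * Real.exp ((L - L) / (2 * b)) - 2 * b * Real.exp ((y - L) / (2 * b)) := by
      simp_rw [Real.norm_of_nonneg (Real.exp_pos _).le]
      exact intervalIntegral.integral_eq_sub_of_hasDerivAt (fun u _ => hwderiv u)
        ((Real.continuous_exp.comp (by continuity)).intervalIntegrable y L)
    simp only [id_eq]
    rw [key, sub_self, zero_div, Real.exp_zero]
    have h0 : 0 ≤ Real.exp ((y - L) / (2 * b)) := (Real.exp_pos _).le
    nlinarith [mul_nonneg hb2.le h0]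
  -- the key pointwise bound
  have key : ∀ K : ℕ, ∀ x ≤ L,
      |h' x - ((∫ u in L..x, p'' K u) + h' L)| * Real.exp ((x - L) / b)
        ≤ E K * Real.exp ((x - L) / (2 * b)) := by
    intro K x hx
    -- Step 1: identify the error as an integral of h'' - p''
    have hh : (∫ u in L..x, h'' u) = h' x - h' L :=
      intervalIntegral.integral_eq_sub_of_hasDerivAt (fun u _ => hd2 u)
        (hcont.intervalIntegrable L x)
    have hint1 : IntervalIntegrable h'' volume L x := hcont.intervalIntegrable L x
    have hint2 : IntervalIntegrable (p'' K) volume L x := (hp''cont K).intervalIntegrable L x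
    have herr : h' x - ((∫ u in L..x, p'' K u) + h' L)
        = ∫ u in L..x, (h'' u - p'' K u) := by
      rw [intervalIntegral.integral_sub hint1 hint2, hh]; ring
    have habs : |h' x - ((∫ u in L..x, p'' K u) + h' L)|
        ≤ ∫ u in x..L, |h'' u - p'' K u| := by
      rw [herr, intervalIntegral.integral_symm x L, abs_neg]
      exact intervalIntegral.abs_integral_le_integral_abs hx
    -- Step 2: insert the weight
    have hconta : Continuous fun u => |h'' u - p'' K u| :=
      (hcont.sub (hp''cont K)).abs
    have hcontb : Continuous fun u =>
        |h'' u - p'' K u| * Real.exp ((u - L) / (2 * b)) * Real.exp ((L - x) / (2 * b)) :=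
      ((hconta.mul (Real.continuous_exp.comp (by continuity))).mul continuous_const)
    have hstep2 : (∫ u in x..L, |h'' u - p'' K u|)
        ≤ ∫ u in x..L,
            |h'' u - p'' K u| * Real.exp ((u - L) / (2 * b)) * Real.exp ((L - x) / (2 * b)) := by
      refine intervalIntegral.integral_mono_on hx (hconta.intervalIntegrable x L)
        (hcontb.intervalIntegrable x L) fun u hu => ?_
      have h1 : (1:ℝ) ≤ Real.exp ((u - L) / (2 * b)) * Real.exp ((L - x) / (2 * b)) := by
        rw [← Real.exp_add]
        refine Real.one_le_exp ?_
        have : (u - L) / (2 * b) + (L - x) / (2 * b) = (u - x) / (2 * b) := by ring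
        rw [this]
        exact div_nonneg (by linarith [hu.1]) hb2.le
      nlinarith [abs_nonneg (h'' u - p'' K u)]
    have hstep3 : (∫ u in x..L,
          |h'' u - p'' K u| * Real.exp ((u - L) / (2 * b)) * Real.exp ((L - x) / (2 * b)))
        = (∫ u in x..L, |h'' u - p'' K u| * Real.exp ((u - L) / (2 * b)))
            * Real.exp ((L - x) / (2 * b)) := by
      rw [← intervalIntegral.integral_mul_const]
    have hstep4 : (∫ u in x..L, |h'' u - p'' K u| * Real.exp ((u - L) / (2 * b))) ≤ E K := by
      rw [intervalIntegral.integral_of_le hx]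
      refine setIntegral_mono_set (hIntErr K) ?_ ?_
      · filter_upwards with u using by positivity
      · exact (Ioc_subset_Iic_self).eventuallyLE
    have hEbound : |h' x - ((∫ u in L..x, p'' K u) + h' L)|
        ≤ E K * Real.exp ((L - x) / (2 * b)) := by
      calc |h' x - ((∫ u in L..x, p'' K u) + h' L)|
          ≤ ∫ u in x..L, |h'' u - p'' K u| := habs
        _ ≤ (∫ u in x..L, |h'' u - p'' K u| * Real.exp ((u - L) / (2 * b)))
              * Real.exp ((L - x) / (2 * b)) := by rw [← hstep3]; exact hstep2
        _ ≤ E K * Real.exp ((L - x) / (2 * b)) :=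
            mul_le_mul_of_nonneg_right hstep4 (Real.exp_pos _).le
    calc |h' x - ((∫ u in L..x, p'' K u) + h' L)| * Real.exp ((x - L) / b)
        ≤ (E K * Real.exp ((L - x) / (2 * b))) * Real.exp ((x - L) / b) :=
          mul_le_mul_of_nonneg_right hEbound (Real.exp_pos _).le
      _ = E K * Real.exp ((x - L) / (2 * b)) := by
          rw [mul_assoc, ← Real.exp_add]
          congr 2
          field_simp
          ring
  -- integrability of the target integrand
  have hFmeas : ∀ K : ℕ, Continuous fun x =>
      |h' x - ((∫ u in L..x, p'' K u) + h' L)| * Real.exp ((x - L) / b) := by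
    intro K
    have hprim : Continuous fun x => ∫ u in L..x, p'' K u :=
      intervalIntegral.continuous_primitive (fun a c => (hp''cont K).intervalIntegrable a c) L
    exact ((hcont'.sub (hprim.add continuous_const)).abs).mul
      (Real.continuous_exp.comp (by continuity))
  have hFint : ∀ K : ℕ, IntegrableOn (fun x =>
      |h' x - ((∫ u in L..x, p'' K u) + h' L)| * Real.exp ((x - L) / b)) (Iic L) := by
    intro K
    refine Integrable.mono' (hw.const_mul (E K)) ((hFmeas K).aestronglyMeasurable) ?_
    filter_upwards [ae_restrict_mem measurableSet_Iic] with x hx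
    rw [Real.norm_of_nonneg (by positivity)]
    exact key K x hx
  -- conclude by squeezing
  have hbound : ∀ K : ℕ,
      (∫ x in Iic L, |h' x - ((∫ u in L..x, p'' K u) + h' L)| * Real.exp ((x - L) / b))
        ≤ E K * ∫ x in Iic L, Real.exp ((x - L) / (2 * b)) := by
    intro K
    rw [← integral_const_mul]
    refine integral_mono_ae (hFint K) (hw.const_mul (E K)) ?_
    filter_upwards [ae_restrict_mem measurableSet_Iic] with x hx
    exact key K x hx
  have hnonneg : ∀ K : ℕ, 0 ≤
      ∫ x in Iic L, |h' x - ((∫ u in L..x, p'' K u) + h' L)| * Real.exp ((x - L) / b) :=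
    fun K => integral_nonneg fun x => by positivity
  refine squeeze_zero hnonneg hbound ?_
  have := hconv.mul_const (∫ x in Iic L, Real.exp ((x - L) / (2 * b)))
  simpa using this
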